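/- arXiv:2605.30835 — 7 statements merged into one kernel-verified Lean document; each statement's English description precedes it below -/
import Mathlib

section
/- Let X, Y, Z be topological spaces and let f : X → Y and g : Y → Z be continuous maps. Then 𝓔(g) © 𝓔(f) ⊆ 𝓔(g ∘ f) as subgroups of 𝓔(X) × 𝓔(Z). (The assignment 𝓔 is a Lax functor.) -/
/-- The setoid on `C(X, Y)` given by the homotopy relation. -/
def homotopicSetoid (X Y : Type*) [TopologicalSpace X] [TopologicalSpace Y] :
    Setoid C(X, Y) :=
  ⟨ContinuousMap.Homotopic, ContinuousMap.Homotopic.equivalence⟩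

/-- The set `[X, Y]` of (free) homotopy classes of continuous maps from `X` to `Y`. -/
abbrev HClass (X Y : Type*) [TopologicalSpace X] [TopologicalSpace Y] :=
  Quotient (homotopicSetoid X Y)

/-- The homotopy class of a continuous map. -/
def hcl {X Y : Type*} [TopologicalSpace X] [TopologicalSpace Y] (f : C(X, Y)) : HClass X Y :=
  Quotient.mk (homotopicSetoid X Y) f

namespace HClass

variable {W X Y Z : Type*} [TopologicalSpace W] [TopologicalSpace X] [TopologicalSpace Y]
  [TopologicalSpace Z]

/-- Composition of homotopy classes. -/
def comp (g : HClass Y Z) (f : HClass X Y) : HClass X Z :=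
  Quotient.map₂ ContinuousMap.comp
    (fun _ _ hg _ _ hf => ContinuousMap.Homotopic.comp hg hf) g f

theorem comp_mk (g : C(Y, Z)) (f : C(X, Y)) : comp (hcl g) (hcl f) = hcl (g.comp f) := rfl

theorem comp_assoc (a : HClass Y Z) (b : HClass X Y) (c : HClass W X) :
    comp (comp a b) c = comp a (comp b c) :=
  Quotient.inductionOn₃ a b c fun _ _ _ => rfl

theorem id_comp (a : HClass X Y) : comp (hcl (ContinuousMap.id Y)) a = a :=
  Quotient.inductionOn a fun f => congrArg (Quotient.mk _) (ContinuousMap.id_comp f)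

theorem comp_id (a : HClass X Y) : comp a (hcl (ContinuousMap.id X)) = a :=
  Quotient.inductionOn a fun f => congrArg (Quotient.mk _) (ContinuousMap.comp_id f)

/-- The monoid `[X, X]` of homotopy classes of self-maps under composition. -/
instance monoid (X : Type*) [TopologicalSpace X] : Monoid (HClass X X) where
  mul a b := comp a b
  one := hcl (ContinuousMap.id X)
  mul_assoc := comp_assoc
  one_mul := id_comp
  mul_one := comp_id

theorem mul_def (a b : HClass X X) : a * b = comp a b := rfl
theorem one_def : (1 : HClass X X) = hcl (ContinuousMap.id X) := rfl

theorem unit_inv_comp (u : (HClass Y Y)ˣ) (a : HClass X Y) :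
    comp (↑u⁻¹ : HClass Y Y) (comp (↑u : HClass Y Y) a) = a := by
  rw [← comp_assoc]
  have h : comp (↑u⁻¹ : HClass Y Y) (↑u : HClass Y Y) = 1 := u.inv_mul
  rw [h]
  exact id_comp a

theorem comp_unit_inv (u : (HClass X X)ˣ) (a : HClass X Y) :
    comp (comp a (↑u : HClass X X)) (↑u⁻¹ : HClass X X) = a := by
  rw [comp_assoc]
  have h : comp (↑u : HClass X X) (↑u⁻¹ : HClass X X) = 1 := u.mul_inv
  rw [h]
  exact comp_id a

end HClass

/-- `𝓔(X)`, the group of homotopy classes of homotopy self-equivalences of `X`: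
the group of units of the monoid `[X, X]`. -/
abbrev SelfEqGroup (X : Type*) [TopologicalSpace X] := (HClass X X)ˣ

section EMap

variable {X Y : Type*} [TopologicalSpace X] [TopologicalSpace Y]

/-- `𝓔(f)`, the subgroup of `𝓔(X) × 𝓔(Y)` of pairs `([h_X], [h_Y])` with
`f ∘ h_X` homotopic to `h_Y ∘ f`. -/
def EMap (f : C(X, Y)) : Subgroup (SelfEqGroup X × SelfEqGroup Y) where
  carrier := { p | HClass.comp (hcl f) ↑p.1 = HClass.comp ↑p.2 (hcl f) }
  one_mem' := by
    show HClass.comp (hcl f) ((1 : SelfEqGroup X) : HClass X X)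
      = HClass.comp ((1 : SelfEqGroup Y) : HClass Y Y) (hcl f)
    rw [Units.val_one, Units.val_one, HClass.one_def, HClass.one_def,
      HClass.comp_id, HClass.id_comp]
  mul_mem' := by
    rintro p q hp hq
    have hp' : HClass.comp (hcl f) ↑p.1 = HClass.comp ↑p.2 (hcl f) := hp
    have hq' : HClass.comp (hcl f) ↑q.1 = HClass.comp ↑q.2 (hcl f) := hq
    show HClass.comp (hcl f) ↑(p.1 * q.1) = HClass.comp ↑(p.2 * q.2) (hcl f)
    rw [Units.val_mul, Units.val_mul, HClass.mul_def, HClass.mul_def,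
      ← HClass.comp_assoc, hp', HClass.comp_assoc, hq', ← HClass.comp_assoc]
  inv_mem' := by
    rintro p hp
    have hp' : HClass.comp (hcl f) ↑p.1 = HClass.comp ↑p.2 (hcl f) := hp
    show HClass.comp (hcl f) ↑p.1⁻¹ = HClass.comp ↑p.2⁻¹ (hcl f)
    calc HClass.comp (hcl f) (↑p.1⁻¹ : HClass X X)
        = HClass.comp (↑p.2⁻¹ : HClass Y Y)
            (HClass.comp (↑p.2 : HClass Y Y)
              (HClass.comp (hcl f) (↑p.1⁻¹ : HClass X X))) :=
          (HClass.unit_inv_comp p.2 _).symm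
      _ = HClass.comp (↑p.2⁻¹ : HClass Y Y)
            (HClass.comp (HClass.comp (↑p.2 : HClass Y Y) (hcl f))
              (↑p.1⁻¹ : HClass X X)) := by
          rw [HClass.comp_assoc]
      _ = HClass.comp (↑p.2⁻¹ : HClass Y Y)
            (HClass.comp (HClass.comp (hcl f) (↑p.1 : HClass X X))
              (↑p.1⁻¹ : HClass X X)) := by
          rw [hp']
      _ = HClass.comp (↑p.2⁻¹ : HClass Y Y) (hcl f) := by
          rw [HClass.comp_unit_inv]

end EMap

/-- The composition `S' © S` of two group correspondences. -/
def Subgroup.corrComp {G F K : Type*} [Group G] [Group F] [Group K]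
    (S' : Subgroup (F × K)) (S : Subgroup (G × F)) : Subgroup (G × K) where
  carrier := { p : G × K | ∃ f : F, (p.1, f) ∈ S ∧ (f, p.2) ∈ S' }
  one_mem' := ⟨1, S.one_mem, S'.one_mem⟩
  mul_mem' := by
    rintro p q ⟨a, ha1, ha2⟩ ⟨b, hb1, hb2⟩
    exact ⟨a * b, S.mul_mem ha1 hb1, S'.mul_mem ha2 hb2⟩
  inv_mem' := by
    rintro p ⟨a, ha1, ha2⟩
    exact ⟨a⁻¹, S.inv_mem ha1, S'.inv_mem ha2⟩

/-- for continuous maps `f : X → Y` and `g : Y → Z`, we have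
`𝓔(g) © 𝓔(f) ⊆ 𝓔(g ∘ f)` as subgroups of `𝓔(X) × 𝓔(Z)` (the assignment `𝓔`
is a Lax functor). -/
theorem EMap_comp_le {X Y Z : Type*} [TopologicalSpace X] [TopologicalSpace Y]
    [TopologicalSpace Z] (f : C(X, Y)) (g : C(Y, Z)) :
    (EMap g).corrComp (EMap f) ≤ EMap (g.comp f) := by
  rintro ⟨hx, hz⟩ ⟨hy, h1, h2⟩
  have h1' : HClass.comp (hcl f) ↑hx = HClass.comp ↑hy (hcl f) := h1
  have h2' : HClass.comp (hcl g) ↑hy = HClass.comp ↑hz (hcl g) := h2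
  show HClass.comp (hcl (g.comp f)) ↑hx = HClass.comp ↑hz (hcl (g.comp f))
  rw [← HClass.comp_mk, HClass.comp_assoc, h1', ← HClass.comp_assoc, h2',
    HClass.comp_assoc]
end

section
/- Let X and Y be topological spaces with Y path connected, and let f : X → Y be a continuous map that is homotopic to a constant map. Then 𝓔(f) = 𝓔(X) × 𝓔(Y), i.e., 𝓔(f) is the whole group 𝓔(X) × 𝓔(Y). -/
/-- if `Y` is path connected and `f : X → Y` is homotopic to a constant map,
then `𝓔(f) = 𝓔(X) × 𝓔(Y)`, i.e. `𝓔(f)` is the whole group `𝓔(X) × 𝓔(Y)`. -/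
theorem EMap_of_homotopic_const {X Y : Type*} [TopologicalSpace X] [TopologicalSpace Y]
    [PathConnectedSpace Y] (f : C(X, Y))
    (hf : ∃ y₀ : Y, f.Homotopic (ContinuousMap.const X y₀)) :
    EMap f = ⊤ := by
  obtain ⟨y₀, hfc⟩ := hf
  have hf0 : hcl f = hcl (ContinuousMap.const X y₀) := Quotient.sound hfc
  ext p
  simp only [Subgroup.mem_top, iff_true]
  show HClass.comp (hcl f) ↑p.1 = HClass.comp ↑p.2 (hcl f)
  obtain ⟨g, hg⟩ := Quotient.exists_rep (↑p.1 : HClass X X)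
  obtain ⟨h, hh⟩ := Quotient.exists_rep (↑p.2 : HClass Y Y)
  rw [hf0, ← hg, ← hh]
  show HClass.comp (hcl (ContinuousMap.const X y₀)) (hcl g)
      = HClass.comp (hcl h) (hcl (ContinuousMap.const X y₀))
  rw [HClass.comp_mk, HClass.comp_mk, ContinuousMap.const_comp, ContinuousMap.comp_const]
  have H : (ContinuousMap.const X y₀).Homotopic (ContinuousMap.const X (h y₀)) :=
    ⟨(PathConnectedSpace.somePath y₀ (h y₀)).toHomotopyConst⟩
  exact Quotient.sound H
end

section
/- Let X and Y be topological spaces with Y path connected, suppose the group 𝓔(Y) is nontrivial, and let c : X → Y be a constant map. Then there is no group homomorphism φ : 𝓔(X) → 𝓔(Y) whose graph {(u, φ(u)) | u ∈ 𝓔(X)} equals 𝓔(c); i.e., c is not a strong 𝓔-map. -/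
/-- if `Y` is path connected, `𝓔(Y)` is nontrivial and `c : X → Y` is a
constant map, then there is no group homomorphism `φ : 𝓔(X) → 𝓔(Y)` whose graph
`{(u, φ(u)) | u ∈ 𝓔(X)}` equals `𝓔(c)`; i.e. `c` is not a strong `𝓔`-map. -/
theorem const_not_strong_E_map {X Y : Type*} [TopologicalSpace X] [TopologicalSpace Y]
    [PathConnectedSpace Y] (hY : Nontrivial (SelfEqGroup Y))
    (c : C(X, Y)) (hc : ∃ y₀ : Y, ∀ x : X, c x = y₀) :
    ¬ ∃ φ : SelfEqGroup X →* SelfEqGroup Y,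
        (Set.range fun u : SelfEqGroup X => (u, φ u)) =
          (EMap c : Set (SelfEqGroup X × SelfEqGroup Y)) := by
  rintro ⟨φ, hφ⟩
  obtain ⟨y₀, hy₀⟩ := hc
  have key : ∀ v : SelfEqGroup Y, ((1 : SelfEqGroup X), v) ∈ EMap c := by
    intro v
    show HClass.comp (hcl c) ↑(1 : SelfEqGroup X) = HClass.comp ↑v (hcl c)
    rw [Units.val_one, HClass.one_def, HClass.comp_id]
    obtain ⟨g, hg⟩ := Quotient.exists_rep (↑v : HClass Y Y)
    rw [← hg]
    show hcl c = hcl (g.comp c)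
    apply Quotient.sound
    have h1 : c = ContinuousMap.const X y₀ := ContinuousMap.ext hy₀
    have h2 : g.comp (ContinuousMap.const X y₀) = ContinuousMap.const X (g y₀) := by
      ext x; simp
    rw [h1, h2]
    exact ⟨(Joined.somePath (PathConnectedSpace.joined y₀ (g y₀))).toHomotopyConst⟩
  have hall : ∀ v : SelfEqGroup Y, v = 1 := by
    intro v
    have : ((1 : SelfEqGroup X), v) ∈ Set.range fun u : SelfEqGroup X => (u, φ u) := by
      rw [hφ]; exact key v
    obtain ⟨u, hu⟩ := this
    have hu1 : u = 1 := congrArg Prod.fst hu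
    have hv : φ u = v := congrArg Prod.snd hu
    rw [hu1, map_one] at hv
    exact hv.symm
  obtain ⟨a, b, hab⟩ := hY
  exact hab ((hall a).trans (hall b).symm)
end

section
/- Let X and Y be topological spaces with Y path connected, suppose the group 𝓔(X) is nontrivial, and let c : X → Y be a constant map. Then there is no group homomorphism ψ : 𝓔(Y) → 𝓔(X) such that {(ψ(v), v) | v ∈ 𝓔(Y)} equals 𝓔(c); i.e., c is not a strong co-𝓔-map. -/
/-- if `Y` is path connected, `𝓔(X)` is nontrivial and `c : X → Y` is a
constant map, then there is no group homomorphism `ψ : 𝓔(Y) → 𝓔(X)` such that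
`{(ψ(v), v) | v ∈ 𝓔(Y)}` equals `𝓔(c)`; i.e. `c` is not a strong co-`𝓔`-map. -/
theorem const_not_strong_coE_map {X Y : Type*} [TopologicalSpace X] [TopologicalSpace Y]
    [PathConnectedSpace Y] (hX : Nontrivial (SelfEqGroup X))
    (c : C(X, Y)) (hc : ∃ y₀ : Y, ∀ x : X, c x = y₀) :
    ¬ ∃ ψ : SelfEqGroup Y →* SelfEqGroup X,
        (Set.range fun v : SelfEqGroup Y => (ψ v, v)) =
          (EMap c : Set (SelfEqGroup X × SelfEqGroup Y)) := by
  rintro ⟨ψ, h⟩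
  obtain ⟨y₀, hy⟩ := hc
  obtain ⟨u, hu⟩ := exists_ne (1 : SelfEqGroup X)
  have key : ∀ a : HClass X X, HClass.comp (hcl c) a = hcl c := fun a =>
    Quotient.inductionOn a fun g =>
      congrArg (Quotient.mk _) (ContinuousMap.ext fun x => by
        simp [hy (g x), hy x])
  have hmem : ((u, (1 : SelfEqGroup Y)) : SelfEqGroup X × SelfEqGroup Y) ∈ EMap c := by
    show HClass.comp (hcl c) ↑u = HClass.comp ((1 : SelfEqGroup Y) : HClass Y Y) (hcl c)
    rw [key, Units.val_one, HClass.one_def, HClass.id_comp]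
  have hmem' : ((u, (1 : SelfEqGroup Y)) : SelfEqGroup X × SelfEqGroup Y) ∈
      (Set.range fun v : SelfEqGroup Y => (ψ v, v)) := by rw [h]; exact hmem
  obtain ⟨v, hv⟩ := hmem'
  have hv2 : v = 1 := congrArg Prod.snd hv
  have hv1 : ψ v = u := congrArg Prod.fst hv
  rw [hv2, map_one] at hv1
  exact hu hv1.symm
end

section
/- Let f : X → Y be a continuous map between topological spaces and let Γ_f = {(x,y) ∈ X × Y | y = f(x)} carry the subspace topology of X × Y, with the continuous projections p₁ : Γ_f → X and p₂ : Γ_f → Y. Let 𝓔(p₁)ᵗ = {(a,b) ∈ 𝓔(X) × 𝓔(Γ_f) | (b,a) ∈ 𝓔(p₁)} be the transpose of 𝓔(p₁) ≤ 𝓔(Γ_f) × 𝓔(X). Then 𝓔(p₂) © 𝓔(p₁)ᵗ = 𝓔(f) as subgroups of 𝓔(X) × 𝓔(Y). -/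
/-- The transpose of a subgroup of `A × B`, a subgroup of `B × A`. -/
def Subgroup.transpose {A B : Type*} [Group A] [Group B] (S : Subgroup (A × B)) :
    Subgroup (B × A) where
  carrier := { p : B × A | (p.2, p.1) ∈ S }
  one_mem' := S.one_mem
  mul_mem' := fun ha hb => S.mul_mem ha hb
  inv_mem' := fun ha => S.inv_mem ha

/-- The graph `Γ_f = {(x, y) ∈ X × Y | y = f x}` of `f`, with the subspace topology. -/
abbrev GraphSpace {X Y : Type*} [TopologicalSpace X] [TopologicalSpace Y] (f : C(X, Y)) :
    Type _ :=
  { p : X × Y // p.2 = f p.1 }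

/-- The first projection `p₁ : Γ_f → X`. -/
def graphProj₁ {X Y : Type*} [TopologicalSpace X] [TopologicalSpace Y] (f : C(X, Y)) :
    C(GraphSpace f, X) :=
  ⟨fun q => q.val.1, continuous_fst.comp continuous_subtype_val⟩

/-- The second projection `p₂ : Γ_f → Y`. -/
def graphProj₂ {X Y : Type*} [TopologicalSpace X] [TopologicalSpace Y] (f : C(X, Y)) :
    C(GraphSpace f, Y) :=
  ⟨fun q => q.val.2, continuous_snd.comp continuous_subtype_val⟩


/-- The embedding `X → Γ_f`, `x ↦ (x, f x)`. -/
def graphEmb {X Y : Type*} [TopologicalSpace X] [TopologicalSpace Y] (f : C(X, Y)) :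
    C(X, GraphSpace f) :=
  ⟨fun x => ⟨(x, f x), rfl⟩, Continuous.subtype_mk (continuous_id.prodMk f.continuous) _⟩

theorem proj₁_comp_emb {X Y : Type*} [TopologicalSpace X] [TopologicalSpace Y] (f : C(X, Y)) :
    (graphProj₁ f).comp (graphEmb f) = ContinuousMap.id X := rfl

theorem emb_comp_proj₁ {X Y : Type*} [TopologicalSpace X] [TopologicalSpace Y] (f : C(X, Y)) :
    (graphEmb f).comp (graphProj₁ f) = ContinuousMap.id (GraphSpace f) := by
  apply ContinuousMap.ext
  rintro ⟨⟨x, y⟩, hq⟩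
  exact Subtype.ext (Prod.ext_iff.mpr ⟨rfl, hq.symm⟩)

theorem proj₂_comp_emb {X Y : Type*} [TopologicalSpace X] [TopologicalSpace Y] (f : C(X, Y)) :
    (graphProj₂ f).comp (graphEmb f) = f := rfl

theorem comp_proj₁_eq_proj₂ {X Y : Type*} [TopologicalSpace X] [TopologicalSpace Y]
    (f : C(X, Y)) : f.comp (graphProj₁ f) = graphProj₂ f := by
  ext q
  exact q.prop.symm

/-- for a continuous map `f : X → Y` with graph correspondence
`X ← Γ_f → Y`, we have `𝓔(p₂) © 𝓔(p₁)ᵗ = 𝓔(f)` as subgroups of `𝓔(X) × 𝓔(Y)`. -/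
theorem EMap_graph {X Y : Type*} [TopologicalSpace X] [TopologicalSpace Y] (f : C(X, Y)) :
    (EMap (graphProj₂ f)).corrComp (EMap (graphProj₁ f)).transpose = EMap f := by
  classical
  set π : HClass (GraphSpace f) X := hcl (graphProj₁ f) with hπ
  set ε : HClass X (GraphSpace f) := hcl (graphEmb f) with hε
  set p₂ : HClass (GraphSpace f) Y := hcl (graphProj₂ f) with hp₂
  have hπε : HClass.comp π ε = (1 : HClass X X) := by
    rw [hπ, hε, HClass.comp_mk, proj₁_comp_emb]; rfl
  have hεπ : HClass.comp ε π = (1 : HClass (GraphSpace f) (GraphSpace f)) := by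
    rw [hπ, hε, HClass.comp_mk, emb_comp_proj₁]; rfl
  have hfε : HClass.comp p₂ ε = hcl f := by
    rw [hp₂, hε, HClass.comp_mk, proj₂_comp_emb]
  have hfπ : HClass.comp (hcl f) π = p₂ := by
    rw [hp₂, hπ, HClass.comp_mk, comp_proj₁_eq_proj₂]
  ext ⟨a, c⟩
  constructor
  · rintro ⟨b, hb1, hb2⟩
    have h1 : HClass.comp π ↑b = HClass.comp ↑a π := hb1
    have h2 : HClass.comp p₂ ↑b = HClass.comp ↑c p₂ := hb2
    show HClass.comp (hcl f) ↑a = HClass.comp ↑c (hcl f)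
    calc HClass.comp (hcl f) ↑a
        = HClass.comp (HClass.comp (hcl f) (HClass.comp ↑a π)) ε := by
          rw [HClass.comp_assoc, HClass.comp_assoc, hπε, HClass.one_def, HClass.comp_id]
      _ = HClass.comp (HClass.comp (hcl f) (HClass.comp π ↑b)) ε := by rw [h1]
      _ = HClass.comp (HClass.comp p₂ ↑b) ε := by
          rw [← HClass.comp_assoc (hcl f) π, hfπ]
      _ = HClass.comp (HClass.comp ↑c p₂) ε := by rw [h2]
      _ = HClass.comp ↑c (hcl f) := by rw [HClass.comp_assoc, hfε]
  · intro h
    have h' : HClass.comp (hcl f) ↑a = HClass.comp ↑c (hcl f) := h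
    have key : ∀ u v : HClass X X,
        HClass.comp (HClass.comp ε (HClass.comp u π)) (HClass.comp ε (HClass.comp v π))
          = HClass.comp ε (HClass.comp (HClass.comp u v) π) := by
      intro u v
      calc HClass.comp (HClass.comp ε (HClass.comp u π)) (HClass.comp ε (HClass.comp v π))
          = HClass.comp ε (HClass.comp u (HClass.comp (HClass.comp π ε)
              (HClass.comp v π))) := by
            rw [HClass.comp_assoc, HClass.comp_assoc, HClass.comp_assoc]
        _ = HClass.comp ε (HClass.comp (HClass.comp u v) π) := by
            rw [hπε, HClass.one_def, HClass.id_comp]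
            simp only [HClass.comp_assoc]
    refine ⟨⟨HClass.comp ε (HClass.comp ↑a π), HClass.comp ε (HClass.comp ↑a⁻¹ π), ?_, ?_⟩,
      ?_, ?_⟩
    · rw [HClass.mul_def, key, ← HClass.mul_def, a.mul_inv, HClass.one_def, HClass.id_comp, hεπ]
    · rw [HClass.mul_def, key, ← HClass.mul_def, a.inv_mul, HClass.one_def, HClass.id_comp, hεπ]
    · show HClass.comp π (HClass.comp ε (HClass.comp ↑a π)) = HClass.comp ↑a π
      rw [← HClass.comp_assoc, hπε, HClass.one_def, HClass.id_comp]
    · show HClass.comp p₂ (HClass.comp ε (HClass.comp ↑a π)) = HClass.comp ↑c p₂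
      rw [← HClass.comp_assoc, hfε, ← HClass.comp_assoc, h', HClass.comp_assoc, hfπ]
end

section
/- Let X and Z be topological spaces with Z path connected, let z₀ ∈ Z, let i₁ : X → X × Z be the continuous map x ↦ (x, z₀), and let p₂ : X × Z → Z be the projection. Then 𝓔(p₂) © 𝓔(i₁) = 𝓔(p₂ ∘ i₁); i.e., the pair (i₁, p₂) of the trivial fibration is an 𝓔-strict-functor pair. -/
/-- The inclusion `i₁ : X → X × Z`, `x ↦ (x, z₀)`. -/
def trivialFibIncl (X : Type*) [TopologicalSpace X] {Z : Type*} [TopologicalSpace Z]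
    (z₀ : Z) : C(X, X × Z) :=
  (ContinuousMap.id X).prodMk (ContinuousMap.const X z₀)

section Aux
variable {X Z : Type*} [TopologicalSpace X] [TopologicalSpace Z]

/-- Constant maps whose values are joined by a path are homotopic. -/
lemma const_homotopic_of_path {a b : Z} (γ : Path a b) :
    (ContinuousMap.const X a).Homotopic (ContinuousMap.const X b) := by
  refine ⟨⟨⟨fun p => γ p.1, γ.continuous.comp continuous_fst⟩, ?_, ?_⟩⟩
  · intro x; simp
  · intro x; simp

lemma homotopic_prodMap {X' Z' : Type*} [TopologicalSpace X'] [TopologicalSpace Z']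
    {f₀ f₁ : C(X, X')} {g₀ g₁ : C(Z, Z')} (hf : f₀.Homotopic f₁) (hg : g₀.Homotopic g₁) :
    (f₀.prodMap g₀).Homotopic (f₁.prodMap g₁) := by
  obtain ⟨F⟩ := hf; obtain ⟨G⟩ := hg
  exact ⟨F.prodMap G⟩

end Aux

/-- for `Z` path connected and the trivial fibration
`X → X × Z → Z` (with `i₁ : x ↦ (x, z₀)` and `p₂` the projection),
`𝓔(p₂) © 𝓔(i₁) = 𝓔(p₂ ∘ i₁)`; i.e. `(i₁, p₂)` is an `𝓔`-strict-functor pair. -/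
theorem EMap_trivial_fibration {X Z : Type*} [TopologicalSpace X] [TopologicalSpace Z]
    [PathConnectedSpace Z] (z₀ : Z) :
    (EMap (ContinuousMap.snd : C(X × Z, Z))).corrComp (EMap (trivialFibIncl X z₀)) =
      EMap ((ContinuousMap.snd : C(X × Z, Z)).comp (trivialFibIncl X z₀)) := by
  ext p
  constructor
  · rintro -
    -- the right-hand side condition holds for every pair, since `p₂ ∘ i₁` is constant
    show HClass.comp (hcl _) (↑p.1 : HClass X X) = HClass.comp (↑p.2 : HClass Z Z) (hcl _)
    obtain ⟨f, hf⟩ := Quotient.exists_rep (↑p.1 : HClass X X)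
    obtain ⟨g, hg⟩ := Quotient.exists_rep (↑p.2 : HClass Z Z)
    rw [← hf, ← hg]
    show hcl ((((ContinuousMap.snd : C(X × Z, Z)).comp (trivialFibIncl X z₀))).comp f)
      = hcl (g.comp ((ContinuousMap.snd : C(X × Z, Z)).comp (trivialFibIncl X z₀)))
    apply Quotient.sound
    have h1 : (((ContinuousMap.snd : C(X × Z, Z)).comp (trivialFibIncl X z₀))).comp f
        = ContinuousMap.const X z₀ := by ext x; rfl
    have h2 : g.comp ((ContinuousMap.snd : C(X × Z, Z)).comp (trivialFibIncl X z₀))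
        = ContinuousMap.const X (g z₀) := by ext x; rfl
    rw [h1, h2]
    exact const_homotopic_of_path (PathConnectedSpace.somePath z₀ (g z₀))
  · rintro -
    obtain ⟨f, hf⟩ := Quotient.exists_rep (↑p.1 : HClass X X)
    obtain ⟨f', hf'⟩ := Quotient.exists_rep (↑p.1⁻¹ : HClass X X)
    obtain ⟨g, hg⟩ := Quotient.exists_rep (↑p.2 : HClass Z Z)
    obtain ⟨g', hg'⟩ := Quotient.exists_rep (↑p.2⁻¹ : HClass Z Z)
    replace hf : hcl f = (↑p.1 : HClass X X) := hf
    replace hf' : hcl f' = (↑p.1⁻¹ : HClass X X) := hf'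
    replace hg : hcl g = (↑p.2 : HClass Z Z) := hg
    replace hg' : hcl g' = (↑p.2⁻¹ : HClass Z Z) := hg'
    have hff' : (f.comp f').Homotopic (ContinuousMap.id X) := by
      apply Quotient.exact (s := homotopicSetoid X X)
      show hcl (f.comp f') = hcl (ContinuousMap.id X)
      rw [← HClass.comp_mk, hf, hf', ← HClass.mul_def, Units.mul_inv, HClass.one_def]
    have hf'f : (f'.comp f).Homotopic (ContinuousMap.id X) := by
      apply Quotient.exact (s := homotopicSetoid X X)
      show hcl (f'.comp f) = hcl (ContinuousMap.id X)
      rw [← HClass.comp_mk, hf, hf', ← HClass.mul_def, Units.inv_mul, HClass.one_def]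
    have hgg' : (g.comp g').Homotopic (ContinuousMap.id Z) := by
      apply Quotient.exact (s := homotopicSetoid Z Z)
      show hcl (g.comp g') = hcl (ContinuousMap.id Z)
      rw [← HClass.comp_mk, hg, hg', ← HClass.mul_def, Units.mul_inv, HClass.one_def]
    have hg'g : (g'.comp g).Homotopic (ContinuousMap.id Z) := by
      apply Quotient.exact (s := homotopicSetoid Z Z)
      show hcl (g'.comp g) = hcl (ContinuousMap.id Z)
      rw [← HClass.comp_mk, hg, hg', ← HClass.mul_def, Units.inv_mul, HClass.one_def]
    have key : ∀ (a : C(X, X)) (b : C(Z, Z)), a.Homotopic (ContinuousMap.id X) →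
        b.Homotopic (ContinuousMap.id Z) → hcl (a.prodMap b) = (1 : HClass (X × Z) (X × Z)) := by
      intro a b ha hb
      have h := homotopic_prodMap ha hb
      have hid : (ContinuousMap.id X).prodMap (ContinuousMap.id Z)
          = ContinuousMap.id (X × Z) := by ext x <;> rfl
      rw [hid] at h
      exact Quotient.sound h
    have hcomp : ∀ (a a' : C(X, X)) (b b' : C(Z, Z)),
        (a.prodMap b).comp (a'.prodMap b') = (a.comp a').prodMap (b.comp b') := by
      intro a a' b b'; ext x <;> rfl
    refine ⟨Units.mk (hcl (f.prodMap g)) (hcl (f'.prodMap g')) ?_ ?_, ?_, ?_⟩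
    · show HClass.comp (hcl (f.prodMap g)) (hcl (f'.prodMap g')) = 1
      rw [HClass.comp_mk, hcomp]
      exact key _ _ hff' hgg'
    · show HClass.comp (hcl (f'.prodMap g')) (hcl (f.prodMap g)) = 1
      rw [HClass.comp_mk, hcomp]
      exact key _ _ hf'f hg'g
    · show HClass.comp (hcl (trivialFibIncl X z₀)) (↑p.1 : HClass X X)
        = HClass.comp (hcl (f.prodMap g)) (hcl (trivialFibIncl X z₀))
      rw [← hf]
      show hcl ((trivialFibIncl X z₀).comp f) = hcl ((f.prodMap g).comp (trivialFibIncl X z₀))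
      apply Quotient.sound
      have h1 : (trivialFibIncl X z₀).comp f = f.prodMk (ContinuousMap.const X z₀) := by
        ext x <;> rfl
      have h2 : (f.prodMap g).comp (trivialFibIncl X z₀)
          = f.prodMk (ContinuousMap.const X (g z₀)) := by ext x <;> rfl
      rw [h1, h2]
      obtain ⟨G⟩ := const_homotopic_of_path (X := X)
        (PathConnectedSpace.somePath z₀ (g z₀))
      exact ⟨(ContinuousMap.Homotopy.refl f).prodMk G⟩
    · show HClass.comp (hcl (ContinuousMap.snd : C(X × Z, Z))) (hcl (f.prodMap g))
        = HClass.comp (↑p.2 : HClass Z Z) (hcl (ContinuousMap.snd : C(X × Z, Z)))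
      rw [← hg]
      show hcl ((ContinuousMap.snd : C(X × Z, Z)).comp (f.prodMap g))
        = hcl (g.comp (ContinuousMap.snd : C(X × Z, Z)))
      exact congrArg hcl (ContinuousMap.ext fun x => rfl)
end

section
/- Let X be a path-connected topological space with a basepoint x₀. Let PX = {γ ∈ C([0,1], X) | γ(0) = x₀} with the subspace topology of the compact-open topology, let g : PX → X be the endpoint evaluation γ ↦ γ(1), let ΩX = {γ ∈ PX | γ(1) = x₀} with the subspace topology, and let f : ΩX → PX be the inclusion. Then 𝓔(g) © 𝓔(f) = 𝓔(g ∘ f); i.e., the loop-path fibration pair (f,g) is an 𝓔-strict-functor pair. -/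
/-- The path space `PX = {γ ∈ C([0,1], X) | γ 0 = x₀}`, a subspace of `C([0,1], X)`
with the compact-open topology. -/
abbrev PathSpc (X : Type*) [TopologicalSpace X] (x₀ : X) : Type _ :=
  { γ : C(unitInterval, X) // γ 0 = x₀ }

/-- The loop space `ΩX = {γ ∈ PX | γ 1 = x₀}`, a subspace of `PX`. -/
abbrev LoopSpc (X : Type*) [TopologicalSpace X] (x₀ : X) : Type _ :=
  { γ : PathSpc X x₀ // γ.val 1 = x₀ }

/-- The endpoint evaluation `g : PX → X`, `γ ↦ γ 1`. -/
def pathEval (X : Type*) [TopologicalSpace X] (x₀ : X) : C(PathSpc X x₀, X) :=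
  ⟨fun γ => γ.val 1, (continuous_eval_const 1).comp continuous_subtype_val⟩

/-- The inclusion `f : ΩX → PX`. -/
def loopIncl (X : Type*) [TopologicalSpace X] (x₀ : X) : C(LoopSpc X x₀, PathSpc X x₀) :=
  ⟨fun γ => γ.val, continuous_subtype_val⟩

section Contraction

variable {X : Type*} [TopologicalSpace X] {x₀ : X}

/-- The constant path, as an element of the path space. -/
def constPathP (X : Type*) [TopologicalSpace X] (x₀ : X) : PathSpc X x₀ :=
  ⟨ContinuousMap.const _ x₀, rfl⟩

/-- Any map into the path space is homotopic to the constant map at the constant path. -/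
theorem homotopic_const_pathSpc {A : Type*} [TopologicalSpace A]
    (u : C(A, PathSpc X x₀)) :
    u.Homotopic (ContinuousMap.const A (constPathP X x₀)) := by
  refine ⟨?_⟩
  -- the underlying two-variable map
  have hsig : ∀ (t s : unitInterval), ((unitInterval.symm t : ℝ) * (s : ℝ)) ∈ unitInterval :=
    fun t s => unitInterval.mul_mem (unitInterval.symm t).2 s.2
  let G : C((unitInterval × A) × unitInterval, X) :=
    ⟨fun q => (u q.1.2).val ⟨(unitInterval.symm q.1.1 : ℝ) * (q.2 : ℝ), hsig _ _⟩, by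
      have h1 : Continuous fun q : (unitInterval × A) × unitInterval =>
          ((u q.1.2).val : C(unitInterval, X)) :=
        continuous_subtype_val.comp (u.continuous.comp (continuous_snd.comp continuous_fst))
      have h2 : Continuous fun q : (unitInterval × A) × unitInterval =>
          (⟨(unitInterval.symm q.1.1 : ℝ) * (q.2 : ℝ), hsig _ _⟩ : unitInterval) := by
        apply Continuous.subtype_mk
        exact ((continuous_subtype_val.comp
          (unitInterval.continuous_symm.comp (continuous_fst.comp continuous_fst))).mul
          (continuous_subtype_val.comp continuous_snd))
      exact continuous_eval.comp (h1.prodMk h2)⟩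
  have hend : ∀ p : unitInterval × A, (G.curry p) 0 = x₀ := by
    intro p
    show (u p.2).val ⟨(unitInterval.symm p.1 : ℝ) * ((0 : unitInterval) : ℝ), _⟩ = x₀
    have : (⟨(unitInterval.symm p.1 : ℝ) * ((0 : unitInterval) : ℝ), hsig _ _⟩ : unitInterval)
        = 0 := by
      ext; simp
    rw [this]
    exact (u p.2).2
  refine
    { toContinuousMap := ⟨fun p => ⟨G.curry p, hend p⟩, G.curry.continuous.subtype_mk _⟩
      map_zero_left := ?_
      map_one_left := ?_ }
  · -- at time 0 we get u
    intro a
    apply Subtype.ext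
    apply ContinuousMap.ext
    intro s
    show (u a).val ⟨(unitInterval.symm 0 : ℝ) * (s : ℝ), _⟩ = (u a).val s
    congr 1
    ext
    simp
  · -- at time 1 we get the constant map
    intro a
    apply Subtype.ext
    apply ContinuousMap.ext
    intro s
    show (u a).val ⟨(unitInterval.symm 1 : ℝ) * (s : ℝ), _⟩ = x₀
    have : (⟨(unitInterval.symm 1 : ℝ) * (s : ℝ), hsig _ _⟩ : unitInterval) = 0 := by
      ext; simp
    rw [this]
    exact (u a).2

/-- The set of homotopy classes of maps into the path space is a subsingleton. -/
theorem hclass_pathSpc_eq {A : Type*} [TopologicalSpace A]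
    (a b : HClass A (PathSpc X x₀)) : a = b :=
  Quotient.inductionOn₂ a b fun u v =>
    Quotient.sound ((homotopic_const_pathSpc u).trans (homotopic_const_pathSpc v).symm)

end Contraction

/-- for a path-connected space `X` with basepoint `x₀` and the loop-path
fibration `ΩX → PX → X`, one has `𝓔(g) © 𝓔(f) = 𝓔(g ∘ f)`; i.e. the loop-path
fibration pair `(f, g)` is an `𝓔`-strict-functor pair. -/
theorem EMap_loop_path_fibration {X : Type*} [TopologicalSpace X] [PathConnectedSpace X]
    (x₀ : X) :
    (EMap (pathEval X x₀)).corrComp (EMap (loopIncl X x₀)) =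
      EMap ((pathEval X x₀).comp (loopIncl X x₀)) := by
  -- g ∘ f is the constant map at x₀
  have hgf : (pathEval X x₀).comp (loopIncl X x₀) = ContinuousMap.const _ x₀ :=
    ContinuousMap.ext fun γ => γ.2
  -- every pair belongs to 𝓔(g ∘ f)
  have hmem : ∀ p : SelfEqGroup (LoopSpc X x₀) × SelfEqGroup X,
      p ∈ EMap ((pathEval X x₀).comp (loopIncl X x₀)) := by
    intro p
    show HClass.comp (hcl ((pathEval X x₀).comp (loopIncl X x₀))) ↑p.1
      = HClass.comp ↑p.2 (hcl ((pathEval X x₀).comp (loopIncl X x₀)))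
    rw [hgf]
    obtain ⟨h, hh⟩ := Quotient.exists_rep (↑p.1 : HClass (LoopSpc X x₀) (LoopSpc X x₀))
    obtain ⟨k, hk⟩ := Quotient.exists_rep (↑p.2 : HClass X X)
    rw [← hh, ← hk]
    show hcl ((ContinuousMap.const _ x₀).comp h) = hcl (k.comp (ContinuousMap.const _ x₀))
    have h1 : (ContinuousMap.const (LoopSpc X x₀) x₀).comp h = ContinuousMap.const _ x₀ := rfl
    have h2 : k.comp (ContinuousMap.const (LoopSpc X x₀) x₀)
        = ContinuousMap.const _ (k x₀) := rfl
    rw [h1, h2]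
    exact Quotient.sound ⟨((PathConnectedSpace.joined x₀ (k x₀)).somePath).toHomotopyConst⟩
  ext p
  constructor
  · intro _
    exact hmem p
  · intro _
    refine ⟨1, ?_, ?_⟩
    · -- (p.1, 1) ∈ 𝓔(f): both sides live in [ΩX, PX] which is a singleton
      show HClass.comp (hcl (loopIncl X x₀)) ↑p.1
        = HClass.comp ↑(1 : SelfEqGroup (PathSpc X x₀)) (hcl (loopIncl X x₀))
      exact hclass_pathSpc_eq _ _
    · -- (1, p.2) ∈ 𝓔(g)
      show HClass.comp (hcl (pathEval X x₀)) ↑(1 : SelfEqGroup (PathSpc X x₀))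
        = HClass.comp ↑p.2 (hcl (pathEval X x₀))
      rw [Units.val_one, HClass.one_def, HClass.comp_id]
      obtain ⟨k, hk⟩ := Quotient.exists_rep (↑p.2 : HClass X X)
      rw [← hk]
      show hcl (pathEval X x₀) = hcl (k.comp (pathEval X x₀))
      -- id on PX is homotopic to the constant map at the constant path
      have hid : (ContinuousMap.id (PathSpc X x₀)).Homotopic
          (ContinuousMap.const _ (constPathP X x₀)) :=
        homotopic_const_pathSpc _
      have hg : (pathEval X x₀).Homotopic (ContinuousMap.const _ x₀) := by
        have := ContinuousMap.Homotopic.comp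
          (ContinuousMap.Homotopic.refl (pathEval X x₀)) hid
        exact this
      have hkg : (k.comp (pathEval X x₀)).Homotopic (ContinuousMap.const _ (k x₀)) := by
        have := ContinuousMap.Homotopic.comp
          (ContinuousMap.Homotopic.refl (k.comp (pathEval X x₀))) hid
        exact this
      have hconst : (ContinuousMap.const (PathSpc X x₀) x₀).Homotopic
          (ContinuousMap.const _ (k x₀)) :=
        ⟨((PathConnectedSpace.joined x₀ (k x₀)).somePath).toHomotopyConst⟩
      exact Quotient.sound ((hg.trans hconst).trans hkg.symm)
end
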